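/- Fix an integer base b ≥ 2, positive real biases p_0, …, p_{b−1} with Σ_{i<b} p_i = 1, and integers r ≥ 1 and N ≥ r. Fix a block v of length r in base b and a real ε with 0 < ε < min over all blocks w of length r of ∏_{i<r} p_{w(i)}. Let B be the set of blocks w of length N in base b such that for some residue m with 0 ≤ m < r, |R_m(w, v) − (1/r)·(N − r + 1)·∏_{i<r} p_{v(i)}| ≥ ε·(N − r + 1), where R_m(w, v) is the number of indices n with 0 ≤ n ≤ N − r, n ≡ m (mod r), and w(n+i) = v(i) for all i < r. Then the Bernoulli measure of the union of the cylinders of the blocks in B tends to 0 as N → ∞; in particular, for all sufficiently large N this measure is less than ε. -/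

import Mathlib

open Filter Finset


lemma aux_factor {b N : ℕ} (p : Fin b → ℝ) (hsum : ∑ i, p i = 1)
    (S : Finset (Fin N)) (g : Fin N → Fin b) :
    ∑ w : Fin N → Fin b, (∏ j, p (w j)) * (if ∀ j ∈ S, w j = g j then (1:ℝ) else 0)
      = ∏ j ∈ S, p (g j) := by
  classical
  have h1 : ∀ w : Fin N → Fin b,
      (∏ j, p (w j)) * (if ∀ j ∈ S, w j = g j then (1:ℝ) else 0)
        = ∏ j, (if j ∈ S then (if w j = g j then p (w j) else 0) else p (w j)) := by
    intro w
    by_cases h : ∀ j ∈ S, w j = g j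
    · rw [if_pos h, mul_one]
      exact Finset.prod_congr rfl fun j _ => by
        by_cases hj : j ∈ S
        · rw [if_pos hj, if_pos (h j hj)]
        · rw [if_neg hj]
    · rw [if_neg h, mul_zero]
      push_neg at h
      obtain ⟨j, hj, hne⟩ := h
      exact (Finset.prod_eq_zero (Finset.mem_univ j) (by rw [if_pos hj, if_neg hne])).symm
  calc ∑ w : Fin N → Fin b, (∏ j, p (w j)) * (if ∀ j ∈ S, w j = g j then (1:ℝ) else 0)
      = ∑ w ∈ Fintype.piFinset (fun _ : Fin N => (univ : Finset (Fin b))),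
          ∏ j, (fun (j : Fin N) (a : Fin b) =>
            if j ∈ S then (if a = g j then p a else 0) else p a) j (w j) := by
        rw [Fintype.piFinset_univ]; exact Finset.sum_congr rfl fun w _ => h1 w
    _ = ∏ j, ∑ a ∈ (univ : Finset (Fin b)),
          (if j ∈ S then (if a = g j then p a else 0) else p a) := by
        rw [Finset.prod_univ_sum]
    _ = ∏ j, (if j ∈ S then p (g j) else 1) := by
        refine Finset.prod_congr rfl fun j _ => ?_
        by_cases hj : j ∈ S
        · simp [hj, Finset.sum_ite_eq' univ (g j) p]
        · simp [hj, hsum]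
    _ = ∏ j ∈ S, p (g j) := by
        rw [Finset.prod_ite_mem, Finset.univ_inter]

noncomputable def Ind {b N r : ℕ} (v : Fin r → Fin b) (s : ℕ) (w : Fin N → Fin b) : ℝ :=
  if (∀ i : Fin r, ∀ h : s + (i : ℕ) < N, w ⟨s + i, h⟩ = v i) then 1 else 0

lemma Ind_nonneg {b N r : ℕ} (v : Fin r → Fin b) (s : ℕ) (w : Fin N → Fin b) :
    0 ≤ Ind v s w := by unfold Ind; split <;> norm_num

lemma Ind_sq {b N r : ℕ} (v : Fin r → Fin b) (s : ℕ) (w : Fin N → Fin b) :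
    Ind v s w * Ind v s w = Ind v s w := by unfold Ind; split <;> norm_num

-- single window
lemma window_exp {b N r : ℕ} (p : Fin b → ℝ) (hsum : ∑ i, p i = 1) (hr : 0 < r)
    (v : Fin r → Fin b) {s : ℕ} (hs : s + r ≤ N) :
    ∑ w : Fin N → Fin b, (∏ j, p (w j)) * Ind v s w = ∏ i, p (v i) := by
  classical
  set S : Finset (Fin N) :=
    (univ : Finset (Fin r)).image (fun i : Fin r => (⟨s + (i:ℕ), by have := i.isLt; omega⟩ : Fin N)) with hS
  set g : Fin N → Fin b := fun j =>
    if h : s ≤ j.val ∧ j.val < s + r then v ⟨j.val - s, by omega⟩ else v ⟨0, hr⟩ with hg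
  have hginj : Function.Injective (fun i : Fin r => (⟨s + (i:ℕ), by have := i.isLt; omega⟩ : Fin N)) := by
    intro i j hij
    have : s + (i : ℕ) = s + (j : ℕ) := congrArg Fin.val hij
    exact Fin.ext (by omega)
  have hgval : ∀ i : Fin r, g ⟨s + (i:ℕ), by have := i.isLt; omega⟩ = v i := by
    intro i
    have h : s ≤ s + (i : ℕ) ∧ s + (i : ℕ) < s + r := ⟨by omega, by have := i.isLt; omega⟩
    simp only [hg, dif_pos h]
    congr 1
    exact Fin.ext (by simp)
  have hcond : ∀ w : Fin N → Fin b,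
      (∀ j ∈ S, w j = g j) ↔
        (∀ i : Fin r, ∀ h : s + (i : ℕ) < N, w ⟨s + i, h⟩ = v i) := by
    intro w
    constructor
    · intro h i hi
      have hmem : (⟨s + i, hi⟩ : Fin N) ∈ S := by
        simp only [hS, Finset.mem_image]
        exact ⟨i, Finset.mem_univ i, rfl⟩
      rw [h _ hmem, ← hgval i]
    · intro h j hj
      simp only [hS, Finset.mem_image] at hj
      obtain ⟨i, _, rfl⟩ := hj
      rw [h i (by have := i.isLt; omega), ← hgval i]
  have := aux_factor p hsum S g
  calc ∑ w : Fin N → Fin b, (∏ j, p (w j)) * Ind v s w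
      = ∑ w : Fin N → Fin b, (∏ j, p (w j)) * (if ∀ j ∈ S, w j = g j then (1:ℝ) else 0) := by
        refine Finset.sum_congr rfl fun w _ => ?_
        unfold Ind
        rw [if_congr (hcond w) rfl rfl]
    _ = ∏ j ∈ S, p (g j) := aux_factor p hsum S g
    _ = ∏ i : Fin r, p (g ⟨s + (i:ℕ), by have := i.isLt; omega⟩) := by
        rw [hS, Finset.prod_image (fun i _ j _ h => hginj h)]
    _ = ∏ i, p (v i) := by
        exact Finset.prod_congr rfl fun i _ => by rw [hgval i]



lemma pair_exp {b N r : ℕ} (p : Fin b → ℝ) (hsum : ∑ i, p i = 1) (hr : 0 < r)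
    (v : Fin r → Fin b) {s t : ℕ} (hst : s + r ≤ t) (ht : t + r ≤ N) :
    ∑ w : Fin N → Fin b, (∏ j, p (w j)) * (Ind v s w * Ind v t w)
      = (∏ i, p (v i)) * (∏ i, p (v i)) := by
  classical
  have hsN : s + r ≤ N := by omega
  set Ss : Finset (Fin N) :=
    (univ : Finset (Fin r)).image (fun i : Fin r => (⟨s + (i:ℕ), by have := i.isLt; omega⟩ : Fin N)) with hSs
  set St : Finset (Fin N) :=
    (univ : Finset (Fin r)).image (fun i : Fin r => (⟨t + (i:ℕ), by have := i.isLt; omega⟩ : Fin N)) with hSt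
  set g : Fin N → Fin b := fun j =>
    if h : s ≤ j.val ∧ j.val < s + r then v ⟨j.val - s, by omega⟩
    else if h : t ≤ j.val ∧ j.val < t + r then v ⟨j.val - t, by omega⟩
    else v ⟨0, hr⟩ with hg
  have hgs : ∀ i : Fin r, g ⟨s + (i:ℕ), by have := i.isLt; omega⟩ = v i := by
    intro i
    have h : s ≤ s + (i : ℕ) ∧ s + (i : ℕ) < s + r := ⟨by omega, by have := i.isLt; omega⟩
    simp only [hg, dif_pos h]
    congr 1; exact Fin.ext (by simp)
  have hgt : ∀ i : Fin r, g ⟨t + (i:ℕ), by have := i.isLt; omega⟩ = v i := by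
    intro i
    have h1 : ¬(s ≤ t + (i : ℕ) ∧ t + (i : ℕ) < s + r) := by omega
    have h2 : t ≤ t + (i : ℕ) ∧ t + (i : ℕ) < t + r := ⟨by omega, by have := i.isLt; omega⟩
    simp only [hg, dif_neg h1, dif_pos h2]
    congr 1; exact Fin.ext (by simp)
  have hdisj : Disjoint Ss St := by
    rw [Finset.disjoint_left]
    intro a ha hb
    simp only [hSs, hSt, Finset.mem_image] at ha hb
    obtain ⟨i, _, rfl⟩ := ha
    obtain ⟨j, _, hj⟩ := hb
    have := congrArg Fin.val hj
    simp only at this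
    have := i.isLt; have := j.isLt; omega
  have hinj : ∀ a : ℕ, Function.Injective
      (fun i : Fin r => (a + (i:ℕ) : ℕ)) := by
    intro a i j hij
    simp only at hij
    exact Fin.ext (by omega)
  have hcond : ∀ w : Fin N → Fin b,
      (∀ j ∈ Ss ∪ St, w j = g j) ↔
        ((∀ i : Fin r, ∀ h : s + (i : ℕ) < N, w ⟨s + i, h⟩ = v i) ∧
         (∀ i : Fin r, ∀ h : t + (i : ℕ) < N, w ⟨t + i, h⟩ = v i)) := by
    intro w
    constructor
    · intro h
      constructor
      · intro i hi
        have hmem : (⟨s + i, hi⟩ : Fin N) ∈ Ss ∪ St := by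
          rw [Finset.mem_union]
          exact Or.inl (by simp only [hSs, Finset.mem_image]; exact ⟨i, Finset.mem_univ i, rfl⟩)
        rw [h _ hmem, ← hgs i]
      · intro i hi
        have hmem : (⟨t + i, hi⟩ : Fin N) ∈ Ss ∪ St := by
          rw [Finset.mem_union]
          exact Or.inr (by simp only [hSt, Finset.mem_image]; exact ⟨i, Finset.mem_univ i, rfl⟩)
        rw [h _ hmem, ← hgt i]
    · rintro ⟨h1, h2⟩ j hj
      rw [Finset.mem_union] at hj
      rcases hj with hj | hj
      · simp only [hSs, Finset.mem_image] at hj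
        obtain ⟨i, _, rfl⟩ := hj
        rw [h1 i (by have := i.isLt; omega), ← hgs i]
      · simp only [hSt, Finset.mem_image] at hj
        obtain ⟨i, _, rfl⟩ := hj
        rw [h2 i (by have := i.isLt; omega), ← hgt i]
  calc ∑ w : Fin N → Fin b, (∏ j, p (w j)) * (Ind v s w * Ind v t w)
      = ∑ w : Fin N → Fin b, (∏ j, p (w j)) *
          (if ∀ j ∈ Ss ∪ St, w j = g j then (1:ℝ) else 0) := by
        refine Finset.sum_congr rfl fun w _ => ?_
        unfold Ind
        rw [if_congr (hcond w) rfl rfl]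
        congr 1
        by_cases h1 : (∀ i : Fin r, ∀ h : s + (i : ℕ) < N, w ⟨s + i, h⟩ = v i) <;>
          by_cases h2 : (∀ i : Fin r, ∀ h : t + (i : ℕ) < N, w ⟨t + i, h⟩ = v i) <;>
          simp [h1, h2]
    _ = ∏ j ∈ Ss ∪ St, p (g j) := aux_factor p hsum _ g
    _ = (∏ j ∈ Ss, p (g j)) * (∏ j ∈ St, p (g j)) := Finset.prod_union hdisj
    _ = (∏ i, p (v i)) * (∏ i, p (v i)) := by
        congr 1
        · rw [hSs, Finset.prod_image (fun i _ j _ h => by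
            have := congrArg Fin.val h; simp only at this; exact Fin.ext (by omega))]
          exact Finset.prod_congr rfl fun i _ => by rw [hgs i]
        · rw [hSt, Finset.prod_image (fun i _ j _ h => by
            have := congrArg Fin.val h; simp only at this; exact Fin.ext (by omega))]
          exact Finset.prod_congr rfl fun i _ => by rw [hgt i]





lemma total_mass {b N : ℕ} (p : Fin b → ℝ) (hsum : ∑ i, p i = 1) :
    ∑ w : Fin N → Fin b, ∏ j, p (w j) = 1 := by
  have hb : Nonempty (Fin b) := by
    rcases Nat.eq_zero_or_pos b with h | h
    · subst h; simp at hsum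
    · exact ⟨⟨0, h⟩⟩
  have := aux_factor p hsum (∅ : Finset (Fin N)) (fun _ => Classical.arbitrary _)
  simpa using this

lemma cov_eq {b N r : ℕ} (p : Fin b → ℝ) (hsum : ∑ i, p i = 1) (hr : 0 < r)
    (v : Fin r → Fin b) {s t : ℕ} (hs : s + r ≤ N) (ht : t + r ≤ N)
    (hmod : s % r = t % r) :
    ∑ w : Fin N → Fin b,
        (∏ j, p (w j)) * ((Ind v s w - ∏ i, p (v i)) * (Ind v t w - ∏ i, p (v i)))
      = if s = t then (∏ i, p (v i)) - (∏ i, p (v i))^2 else 0 := by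
  classical
  set q : ℝ := ∏ i, p (v i) with hq
  have key : ∀ s' t' : ℕ, s' + r ≤ t' → t' + r ≤ N →
      ∑ w : Fin N → Fin b, (∏ j, p (w j)) * (Ind v s' w * Ind v t' w) = q * q :=
    fun s' t' h1 h2 => pair_exp p hsum hr v h1 h2
  have hIst : ∑ w : Fin N → Fin b, (∏ j, p (w j)) * (Ind v s w * Ind v t w)
      = if s = t then q else q^2 := by
    rcases lt_trichotomy s t with hlt | heq | hlt
    · rw [if_neg (Nat.ne_of_lt hlt)]
      have hdvd : r ∣ t - s := (Nat.modEq_iff_dvd' (le_of_lt hlt)).mp hmod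
      have hge : r ≤ t - s := Nat.le_of_dvd (by omega) hdvd
      rw [key s t (by omega) ht, sq]
    · subst heq
      rw [if_pos rfl]
      calc ∑ w : Fin N → Fin b, (∏ j, p (w j)) * (Ind v s w * Ind v s w)
          = ∑ w : Fin N → Fin b, (∏ j, p (w j)) * Ind v s w :=
            Finset.sum_congr rfl fun w _ => by rw [Ind_sq]
        _ = q := window_exp p hsum hr v hs
    · rw [if_neg (Nat.ne_of_gt hlt)]
      have hdvd : r ∣ s - t := (Nat.modEq_iff_dvd' (le_of_lt hlt)).mp hmod.symm
      have hge : r ≤ s - t := Nat.le_of_dvd (by omega) hdvd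
      calc ∑ w : Fin N → Fin b, (∏ j, p (w j)) * (Ind v s w * Ind v t w)
          = ∑ w : Fin N → Fin b, (∏ j, p (w j)) * (Ind v t w * Ind v s w) :=
            Finset.sum_congr rfl fun w _ => by ring
        _ = q * q := key t s (by omega) hs
        _ = q^2 := (sq q).symm
  have hEs := window_exp p hsum hr v (s := s) hs
  have hEt := window_exp p hsum hr v (s := t) ht
  have hTot := total_mass (N := N) p hsum
  calc ∑ w : Fin N → Fin b, (∏ j, p (w j)) * ((Ind v s w - q) * (Ind v t w - q))
      = (∑ w : Fin N → Fin b, (∏ j, p (w j)) * (Ind v s w * Ind v t w))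
        - q * (∑ w : Fin N → Fin b, (∏ j, p (w j)) * Ind v s w)
        - q * (∑ w : Fin N → Fin b, (∏ j, p (w j)) * Ind v t w)
        + q^2 * (∑ w : Fin N → Fin b, ∏ j, p (w j)) := by
        rw [Finset.mul_sum, Finset.mul_sum, Finset.mul_sum, ← Finset.sum_sub_distrib,
          ← Finset.sum_sub_distrib, ← Finset.sum_add_distrib]
        exact Finset.sum_congr rfl fun w _ => by ring
    _ = (if s = t then q else q^2) - q * q - q * q + q^2 * 1 := by
        rw [hIst, hEs, hEt, hTot]
    _ = if s = t then q - q^2 else 0 := by split_ifs <;> ring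

lemma resid_sum {r M : ℕ} (hr : 0 < r) :
    ∑ m ∈ range r, ((range M).filter (fun s => s % r = m)).card = M := by
  classical
  simp only [Finset.card_filter]
  rw [Finset.sum_comm]
  have h : ∀ s ∈ range M, (∑ m ∈ range r, if s % r = m then 1 else 0) = 1 := by
    intro s _
    rw [Finset.sum_ite_eq (range r) (s % r) (fun _ => 1),
      if_pos (Finset.mem_range.mpr (Nat.mod_lt s hr))]
  rw [Finset.sum_congr rfl h]
  simp

lemma resid_card {r m M : ℕ} (hr : 0 < r) (hm : m < r) :
    |((((range M).filter (fun s => s % r = m)).card : ℝ) - (M : ℝ) / r)| ≤ 1 := by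
  classical
  set c := ((range M).filter (fun s => s % r = m)).card with hc
  have hub : c ≤ M / r + 1 := by
    have := Finset.card_range (M / r + 1)
    calc c ≤ (range (M / r + 1)).card := ?_
      _ = M / r + 1 := Finset.card_range _
    apply Finset.card_le_card_of_injOn (fun s => s / r)
    · intro s hs
      simp only [Finset.coe_filter, Finset.mem_coe, Finset.mem_filter, Finset.mem_range, Set.mem_setOf_eq] at hs
      exact Finset.mem_range.mpr (Nat.lt_succ_of_le (Nat.div_le_div_right (le_of_lt hs.1)))
    · intro s hs t hts heq
      simp only [Finset.coe_filter, Finset.mem_range, Set.mem_setOf_eq] at hs hts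
      have heq' : s / r = t / r := heq
      have h1 : s = r * (s / r) + s % r := (Nat.div_add_mod s r).symm
      have h2 : t = r * (t / r) + t % r := (Nat.div_add_mod t r).symm
      rw [h1, h2, heq', hs.2, hts.2]
  have hlb : M / r ≤ c := by
    have hsub : (range (M / r)).image (fun k => m + k * r) ⊆
        (range M).filter (fun s => s % r = m) := by
      intro x hx
      simp only [Finset.mem_image, Finset.mem_range] at hx
      obtain ⟨k, hk, rfl⟩ := hx
      have h1 : (k + 1) * r ≤ (M / r) * r := Nat.mul_le_mul_right r hk
      have h2 : (M / r) * r ≤ M := Nat.div_mul_le_self M r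
      simp only [Finset.mem_filter, Finset.mem_range]
      refine ⟨?_, ?_⟩
      · calc m + k * r < r + k * r := Nat.add_lt_add_right hm _
          _ = (k + 1) * r := by ring
          _ ≤ (M / r) * r := h1
          _ ≤ M := h2
      · rw [Nat.add_mul_mod_self_right, Nat.mod_eq_of_lt hm]
    calc M / r = ((range (M / r)).image (fun k => m + k * r)).card := by
          rw [Finset.card_image_of_injective _ (fun a b h => by
            exact Nat.eq_of_mul_eq_mul_right hr (Nat.add_left_cancel h))]
          simp
      _ ≤ c := Finset.card_le_card hsub
  have hr0 : (0 : ℝ) < r := by exact_mod_cast hr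
  have hMlt : M < (M / r + 1) * r := by
    calc M = r * (M / r) + M % r := (Nat.div_add_mod M r).symm
      _ < r * (M / r) + r := Nat.add_lt_add_left (Nat.mod_lt M hr) _
      _ = (M / r + 1) * r := by ring
  rw [abs_le]
  constructor
  · -- -1 ≤ c - M/r  i.e.  M/r ≤ c + 1, i.e. M ≤ (c+1) * r
    have hn : M ≤ (c + 1) * r := le_trans (le_of_lt hMlt) (Nat.mul_le_mul_right r (by omega))
    have : (M : ℝ) ≤ (c + 1) * r := by exact_mod_cast hn
    rw [neg_le, neg_sub, sub_le_iff_le_add, div_le_iff₀ hr0]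
    linarith
  · -- c - M/r ≤ 1  i.e.  c ≤ M/r + 1 ; use c ≤ M/r(ℕ)+1 and (M/r(ℕ)) ≤ M/r
    have h1 : ((M / r : ℕ) : ℝ) ≤ (M : ℝ) / r := Nat.cast_div_le
    have h2 : (c : ℝ) ≤ ((M / r : ℕ) : ℝ) + 1 := by exact_mod_cast hub
    linarith



lemma key_bound {b : ℕ} (p : Fin b → ℝ) (hp : ∀ i, 0 < p i) (hsum : ∑ i, p i = 1)
    {r : ℕ} (hr : 1 ≤ r) (v : Fin r → Fin b) (ε : ℝ)
    {N : ℕ} (hN : r ≤ N) (h1 : 1 ≤ ε * ((N + 1 - r : ℕ) : ℝ)) :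
    (∑ w ∈ (univ : Finset (Fin N → Fin b)).filter
          (fun w => ∃ m < r,
            ε * ((N + 1 - r : ℕ) : ℝ) ≤
              |((((Finset.range (N + 1 - r)).filter
                    (fun s => s % r = m ∧
                      ∀ i : Fin r, ∀ h : s + (i : ℕ) < N, w ⟨s + i, h⟩ = v i)).card : ℝ))
                - ((N + 1 - r : ℕ) : ℝ) * (∏ i, p (v i)) / r|),
          ∏ j, p (w j)) * (ε * ((N + 1 - r : ℕ) : ℝ) - 1)^2 ≤ ((N + 1 - r : ℕ) : ℝ) := by
  have hr' : 0 < r := hr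
  set M : ℕ := N + 1 - r with hM
  set q : ℝ := ∏ i, p (v i) with hq
  set P : (Fin N → Fin b) → ℝ := fun w => ∏ j, p (w j) with hP
  have hP0 : ∀ w, 0 ≤ P w := fun w => Finset.prod_nonneg fun j _ => (hp _).le
  have hp1 : ∀ i, p i ≤ 1 := fun i => by
    rw [← hsum]
    exact Finset.single_le_sum (fun j _ => (hp j).le) (Finset.mem_univ i)
  have hq0 : 0 ≤ q := Finset.prod_nonneg fun i _ => (hp _).le
  have hq1 : q ≤ 1 := Finset.prod_le_one (fun i _ => (hp _).le) (fun i _ => hp1 _)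
  have hεM1 : 0 ≤ ε * (M : ℝ) - 1 := by linarith
  set T : ℕ → Finset ℕ := fun m => (range M).filter (fun s => s % r = m) with hT
  have hsrN : ∀ s ∈ range M, s + r ≤ N := fun s hs => by
    rw [Finset.mem_range] at hs; omega
  -- card as sum of indicators
  have hcard : ∀ (m : ℕ) (w : Fin N → Fin b),
      ((((range M).filter (fun s => s % r = m ∧
          ∀ i : Fin r, ∀ h : s + (i : ℕ) < N, w ⟨s + i, h⟩ = v i)).card : ℝ))
        = ∑ s ∈ T m, Ind v s w := by
    intro m w
    rw [hT]
    rw [Finset.sum_filter, Finset.card_filter]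
    push_cast
    refine Finset.sum_congr rfl fun s _ => ?_
    unfold Ind
    by_cases hA : s % r = m <;>
      by_cases hC : (∀ i : Fin r, ∀ h : s + (i : ℕ) < N, w ⟨s + i, h⟩ = v i) <;>
      simp [hA, hC]
  -- variance identity
  have hvar : ∀ m : ℕ, ∑ w : Fin N → Fin b, P w * (∑ s ∈ T m, (Ind v s w - q))^2
      = ((T m).card : ℝ) * (q - q^2) := by
    intro m
    have exp1 : ∀ w : Fin N → Fin b, (∑ s ∈ T m, (Ind v s w - q))^2
        = ∑ s ∈ T m, ∑ t ∈ T m, (Ind v s w - q) * (Ind v t w - q) := fun w => by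
      rw [sq, Finset.sum_mul_sum]
    have hmem : ∀ s ∈ T m, s + r ≤ N ∧ s % r = m := by
      intro s hs
      rw [hT, Finset.mem_filter] at hs
      exact ⟨hsrN s hs.1, hs.2⟩
    calc ∑ w : Fin N → Fin b, P w * (∑ s ∈ T m, (Ind v s w - q))^2
        = ∑ w : Fin N → Fin b, ∑ s ∈ T m, ∑ t ∈ T m,
            P w * ((Ind v s w - q) * (Ind v t w - q)) := by
          simp only [exp1, Finset.mul_sum]
      _ = ∑ s ∈ T m, ∑ t ∈ T m, ∑ w : Fin N → Fin b,
            P w * ((Ind v s w - q) * (Ind v t w - q)) := by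
          rw [Finset.sum_comm]
          exact Finset.sum_congr rfl fun s _ => Finset.sum_comm
      _ = ∑ s ∈ T m, ∑ t ∈ T m, (if s = t then q - q^2 else 0) := by
          refine Finset.sum_congr rfl fun s hs => Finset.sum_congr rfl fun t ht => ?_
          exact cov_eq p hsum hr' v (hmem s hs).1 (hmem t ht).1
            ((hmem s hs).2.trans (hmem t ht).2.symm)
      _ = ∑ s ∈ T m, (q - q^2) := by
          refine Finset.sum_congr rfl fun s hs => ?_
          rw [Finset.sum_ite_eq (T m) s (fun _ => q - q^2), if_pos hs]
      _ = ((T m).card : ℝ) * (q - q^2) := by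
          rw [Finset.sum_const, nsmul_eq_mul]
  -- Chebyshev per residue
  have hcheb : ∀ m, m < r →
      (∑ w ∈ (univ : Finset (Fin N → Fin b)).filter
          (fun w => ε * ((M : ℕ) : ℝ) ≤
            |((((range M).filter (fun s => s % r = m ∧
                  ∀ i : Fin r, ∀ h : s + (i : ℕ) < N, w ⟨s + i, h⟩ = v i)).card : ℝ))
              - ((M : ℕ) : ℝ) * q / r|),
          P w) * (ε * (M : ℝ) - 1)^2 ≤ ((T m).card : ℝ) := by
    intro m hm
    have hcm : |(((T m).card : ℝ)) - (M : ℝ) / r| ≤ 1 := resid_card hr' hm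
    have hpoint : ∀ w ∈ (univ : Finset (Fin N → Fin b)).filter
        (fun w => ε * ((M : ℕ) : ℝ) ≤
          |((((range M).filter (fun s => s % r = m ∧
                ∀ i : Fin r, ∀ h : s + (i : ℕ) < N, w ⟨s + i, h⟩ = v i)).card : ℝ))
            - ((M : ℕ) : ℝ) * q / r|),
        (ε * (M : ℝ) - 1)^2 ≤ (∑ s ∈ T m, (Ind v s w - q))^2 := by
      intro w hw
      rw [Finset.mem_filter] at hw
      have hw2 := hw.2
      rw [hcard m w] at hw2
      set R : ℝ := ∑ s ∈ T m, Ind v s w with hR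
      have hD : ∑ s ∈ T m, (Ind v s w - q) = R - ((T m).card : ℝ) * q := by
        rw [Finset.sum_sub_distrib, Finset.sum_const, nsmul_eq_mul]
      have habs2 : |((T m).card : ℝ) * q - (M : ℝ) * q / r| ≤ 1 := by
        have heq : ((T m).card : ℝ) * q - (M : ℝ) * q / r
            = (((T m).card : ℝ) - (M : ℝ) / r) * q := by ring
        rw [heq, abs_mul, abs_of_nonneg hq0]
        exact mul_le_one₀ hcm hq0 hq1
      have habs : ε * (M : ℝ) - 1 ≤ |∑ s ∈ T m, (Ind v s w - q)| := by
        rw [hD]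
        have heq : R - ((T m).card : ℝ) * q
            = (R - (M : ℝ) * q / r) - (((T m).card : ℝ) * q - (M : ℝ) * q / r) := by ring
        rw [heq]
        have h3 := abs_sub_abs_le_abs_sub (R - (M : ℝ) * q / r)
          (((T m).card : ℝ) * q - (M : ℝ) * q / r)
        linarith
      calc (ε * (M : ℝ) - 1)^2 ≤ |∑ s ∈ T m, (Ind v s w - q)|^2 :=
            pow_le_pow_left₀ hεM1 habs 2
        _ = (∑ s ∈ T m, (Ind v s w - q))^2 := sq_abs _
    calc (∑ w ∈ _, P w) * (ε * (M : ℝ) - 1)^2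
        = ∑ w ∈ (univ : Finset (Fin N → Fin b)).filter
            (fun w => ε * ((M : ℕ) : ℝ) ≤
              |((((range M).filter (fun s => s % r = m ∧
                    ∀ i : Fin r, ∀ h : s + (i : ℕ) < N, w ⟨s + i, h⟩ = v i)).card : ℝ))
                - ((M : ℕ) : ℝ) * q / r|),
            P w * (ε * (M : ℝ) - 1)^2 := Finset.sum_mul _ _ _
      _ ≤ ∑ w ∈ (univ : Finset (Fin N → Fin b)).filter
            (fun w => ε * ((M : ℕ) : ℝ) ≤
              |((((range M).filter (fun s => s % r = m ∧
                    ∀ i : Fin r, ∀ h : s + (i : ℕ) < N, w ⟨s + i, h⟩ = v i)).card : ℝ))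
                - ((M : ℕ) : ℝ) * q / r|),
            P w * (∑ s ∈ T m, (Ind v s w - q))^2 :=
          Finset.sum_le_sum fun w hw =>
            mul_le_mul_of_nonneg_left (hpoint w hw) (hP0 w)
      _ ≤ ∑ w : Fin N → Fin b, P w * (∑ s ∈ T m, (Ind v s w - q))^2 :=
          Finset.sum_le_sum_of_subset_of_nonneg (Finset.filter_subset _ _)
            (fun w _ _ => mul_nonneg (hP0 w) (sq_nonneg _))
      _ = ((T m).card : ℝ) * (q - q^2) := hvar m
      _ ≤ ((T m).card : ℝ) * 1 := by
          apply mul_le_mul_of_nonneg_left _ (Nat.cast_nonneg _)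
          nlinarith
      _ = ((T m).card : ℝ) := mul_one _
  -- union bound
  have hunion : (∑ w ∈ (univ : Finset (Fin N → Fin b)).filter
        (fun w => ∃ m < r,
          ε * ((M : ℕ) : ℝ) ≤
            |((((range M).filter (fun s => s % r = m ∧
                  ∀ i : Fin r, ∀ h : s + (i : ℕ) < N, w ⟨s + i, h⟩ = v i)).card : ℝ))
              - ((M : ℕ) : ℝ) * q / r|),
        P w)
      ≤ ∑ m ∈ range r, ∑ w ∈ (univ : Finset (Fin N → Fin b)).filter
          (fun w => ε * ((M : ℕ) : ℝ) ≤
            |((((range M).filter (fun s => s % r = m ∧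
                  ∀ i : Fin r, ∀ h : s + (i : ℕ) < N, w ⟨s + i, h⟩ = v i)).card : ℝ))
              - ((M : ℕ) : ℝ) * q / r|),
          P w := by
    rw [Finset.sum_filter]
    have hrw : ∀ m ∈ range r, (∑ w ∈ (univ : Finset (Fin N → Fin b)).filter
        (fun w => ε * ((M : ℕ) : ℝ) ≤
          |((((range M).filter (fun s => s % r = m ∧
                ∀ i : Fin r, ∀ h : s + (i : ℕ) < N, w ⟨s + i, h⟩ = v i)).card : ℝ))
            - ((M : ℕ) : ℝ) * q / r|),
        P w) = ∑ w : Fin N → Fin b,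
          if (ε * ((M : ℕ) : ℝ) ≤
            |((((range M).filter (fun s => s % r = m ∧
                  ∀ i : Fin r, ∀ h : s + (i : ℕ) < N, w ⟨s + i, h⟩ = v i)).card : ℝ))
              - ((M : ℕ) : ℝ) * q / r|) then P w else 0 :=
      fun m _ => Finset.sum_filter _ _
    rw [Finset.sum_congr rfl hrw, Finset.sum_comm]
    refine Finset.sum_le_sum fun w _ => ?_
    by_cases hex : ∃ m < r, ε * ((M : ℕ) : ℝ) ≤
        |((((range M).filter (fun s => s % r = m ∧
              ∀ i : Fin r, ∀ h : s + (i : ℕ) < N, w ⟨s + i, h⟩ = v i)).card : ℝ))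
          - ((M : ℕ) : ℝ) * q / r|
    · rw [if_pos hex]
      obtain ⟨m0, hm0, hc0⟩ := hex
      have := Finset.single_le_sum (f := fun m =>
          if (ε * ((M : ℕ) : ℝ) ≤
            |((((range M).filter (fun s => s % r = m ∧
                  ∀ i : Fin r, ∀ h : s + (i : ℕ) < N, w ⟨s + i, h⟩ = v i)).card : ℝ))
              - ((M : ℕ) : ℝ) * q / r|) then P w else 0)
        (fun m _ => by split_ifs <;> first | exact hP0 w | exact le_rfl)
        (Finset.mem_range.mpr hm0)
      rw [if_pos hc0] at this
      exact this
    · rw [if_neg hex]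
      exact Finset.sum_nonneg fun m _ => by
        split_ifs <;> first | exact hP0 w | exact le_rfl
  calc (∑ w ∈ (univ : Finset (Fin N → Fin b)).filter
        (fun w => ∃ m < r,
          ε * ((M : ℕ) : ℝ) ≤
            |((((range M).filter (fun s => s % r = m ∧
                  ∀ i : Fin r, ∀ h : s + (i : ℕ) < N, w ⟨s + i, h⟩ = v i)).card : ℝ))
              - ((M : ℕ) : ℝ) * q / r|),
        P w) * (ε * (M : ℝ) - 1)^2
      ≤ (∑ m ∈ range r, ∑ w ∈ (univ : Finset (Fin N → Fin b)).filter
          (fun w => ε * ((M : ℕ) : ℝ) ≤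
            |((((range M).filter (fun s => s % r = m ∧
                  ∀ i : Fin r, ∀ h : s + (i : ℕ) < N, w ⟨s + i, h⟩ = v i)).card : ℝ))
              - ((M : ℕ) : ℝ) * q / r|),
          P w) * (ε * (M : ℝ) - 1)^2 :=
        mul_le_mul_of_nonneg_right hunion (sq_nonneg _)
    _ = ∑ m ∈ range r, (∑ w ∈ (univ : Finset (Fin N → Fin b)).filter
          (fun w => ε * ((M : ℕ) : ℝ) ≤
            |((((range M).filter (fun s => s % r = m ∧
                  ∀ i : Fin r, ∀ h : s + (i : ℕ) < N, w ⟨s + i, h⟩ = v i)).card : ℝ))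
              - ((M : ℕ) : ℝ) * q / r|),
          P w) * (ε * (M : ℝ) - 1)^2 := Finset.sum_mul _ _ _
    _ ≤ ∑ m ∈ range r, ((T m).card : ℝ) :=
        Finset.sum_le_sum fun m hm => hcheb m (Finset.mem_range.mp hm)
    _ = ((∑ m ∈ range r, (T m).card : ℕ) : ℝ) := by push_cast; rfl
    _ = ((M : ℕ) : ℝ) := by rw [hT]; exact_mod_cast congrArg Nat.cast (resid_sum (M := M) hr')

/-- **Cassels-style discrepancy bound.** Fix a base `b ≥ 2`, positive biases `p` summing to
`1`, a block `v` of length `r ≥ 1`, and `0 < ε` smaller than `∏_{i<r} p_{w i}` for every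
length-`r` block `w`.  For a length-`N` block `w` (`N ≥ r`) and `0 ≤ m < r`, let `R_m(w,v)`
be the number of occurrences of `v` in `w` starting at positions `≡ m (mod r)`.  Let `B_N`
be the set of length-`N` blocks `w` such that for some `m < r`,
`|R_m(w,v) - (1/r)·(N-r+1)·∏_{i<r} p_{v i}| ≥ ε·(N-r+1)`.
Then the Bernoulli measure of `B_N` (the sum over `w ∈ B_N` of `∏_{j<N} p_{w j}`) tends to
`0` as `N → ∞`; in particular, it is `< ε` for all sufficiently large `N`. -/
theorem cassels_bad_blocks_measure_tendsto_zero (b : ℕ) (hb : 2 ≤ b)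
    (p : Fin b → ℝ) (hp : ∀ i, 0 < p i) (hsum : ∑ i, p i = 1)
    (r : ℕ) (hr : 1 ≤ r) (v : Fin r → Fin b)
    (ε : ℝ) (hε : 0 < ε) (hεmin : ∀ w : Fin r → Fin b, ε < ∏ i, p (w i)) :
    Tendsto
      (fun N : ℕ =>
        ∑ w ∈ (univ : Finset (Fin N → Fin b)).filter
          (fun w => ∃ m < r,
            ε * ((N + 1 - r : ℕ) : ℝ) ≤
              |((((Finset.range (N + 1 - r)).filter
                    (fun s => s % r = m ∧
                      ∀ i : Fin r, ∀ h : s + (i : ℕ) < N, w ⟨s + i, h⟩ = v i)).card : ℝ))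
                - ((N + 1 - r : ℕ) : ℝ) * (∏ i, p (v i)) / r|),
          ∏ j, p (w j))
      atTop (nhds 0) ∧
    ∀ᶠ N : ℕ in atTop,
      (∑ w ∈ (univ : Finset (Fin N → Fin b)).filter
          (fun w => ∃ m < r,
            ε * ((N + 1 - r : ℕ) : ℝ) ≤
              |((((Finset.range (N + 1 - r)).filter
                    (fun s => s % r = m ∧
                      ∀ i : Fin r, ∀ h : s + (i : ℕ) < N, w ⟨s + i, h⟩ = v i)).card : ℝ))
                - ((N + 1 - r : ℕ) : ℝ) * (∏ i, p (v i)) / r|),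
          ∏ j, p (w j)) < ε := by
  set F : ℕ → ℝ := fun N : ℕ =>
        ∑ w ∈ (univ : Finset (Fin N → Fin b)).filter
          (fun w => ∃ m < r,
            ε * ((N + 1 - r : ℕ) : ℝ) ≤
              |((((Finset.range (N + 1 - r)).filter
                    (fun s => s % r = m ∧
                      ∀ i : Fin r, ∀ h : s + (i : ℕ) < N, w ⟨s + i, h⟩ = v i)).card : ℝ))
                - ((N + 1 - r : ℕ) : ℝ) * (∏ i, p (v i)) / r|),
          ∏ j, p (w j) with hF
  have hF0 : ∀ N, 0 ≤ F N := fun N =>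
    Finset.sum_nonneg fun w _ => Finset.prod_nonneg fun j _ => (hp _).le
  have hFb : ∀ N : ℕ, r ≤ N → 2 ≤ ε * ((N + 1 - r : ℕ) : ℝ) →
      F N ≤ 4 / (ε^2 * ((N + 1 - r : ℕ) : ℝ)) := by
    intro N hN h2
    set M : ℝ := ((N + 1 - r : ℕ) : ℝ) with hMdef
    have hM0 : 0 < M := by
      have : (0:ℝ) ≤ M := Nat.cast_nonneg _
      rcases this.lt_or_eq with h | h
      · exact h
      · exfalso; rw [← h] at h2; simp at h2; linarith
    have hc0 : 0 < ε * M - 1 := by linarith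
    have hkey : F N * (ε * M - 1)^2 ≤ M := key_bound p hp hsum hr v ε hN (by linarith)
    have step1 : F N ≤ M / (ε * M - 1)^2 := by
      rw [le_div_iff₀ (by positivity)]
      exact hkey
    have step2 : M / (ε * M - 1)^2 ≤ 4 / (ε^2 * M) := by
      rw [div_le_div_iff₀ (by positivity) (by positivity)]
      nlinarith [sq_nonneg (ε * M - 2), hM0, hc0]
    linarith
  have hMnat : Tendsto (fun N : ℕ => ((N + 1 - r : ℕ) : ℝ)) atTop atTop := by
    apply tendsto_natCast_atTop_atTop.comp
    exact tendsto_atTop_atTop.mpr fun k => ⟨k + r, fun n hn => by omega⟩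
  have hg : Tendsto (fun N : ℕ => 4 / (ε^2 * ((N + 1 - r : ℕ) : ℝ))) atTop (nhds 0) := by
    apply Tendsto.div_atTop (tendsto_const_nhds)
    exact Tendsto.const_mul_atTop (by positivity) hMnat
  have hev : ∀ᶠ N : ℕ in atTop, r ≤ N ∧ 2 ≤ ε * ((N + 1 - r : ℕ) : ℝ) := by
    filter_upwards [eventually_ge_atTop r, hMnat.eventually_ge_atTop (2 / ε)] with N h1 h2
    refine ⟨h1, ?_⟩
    rw [div_le_iff₀ hε] at h2
    linarith
  have htend : Tendsto F atTop (nhds 0) := by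
    apply squeeze_zero' (Eventually.of_forall hF0) _ hg
    filter_upwards [hev] with N hN
    exact hFb N hN.1 hN.2
  exact ⟨htend, htend.eventually_lt_const hε⟩
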